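/- arXiv:2508.14651 — 3 statements merged into one kernel-verified Lean document; each statement's English description precedes it below -/
import Mathlib

section
/- Let I be an ideal of C(X), and let X∖⋂Z[I] be infinite. Then in C(X) with the m^I-topology, every compact subset has empty interior; conversely, if every compact subset of C(X) with the m^I-topology has empty interior, then X∖⋂Z[I] is infinite. -/
open Set Topology TopologicalSpace Pointwise

/-- `⋂ Z[I] = ⋂_{g ∈ I} Z(g)`, the intersection of the zero sets of members of `I`. -/
def zInter {X : Type*} [TopologicalSpace X] (I : Ideal C(X, ℝ)) : Set X :=
  {x | ∀ g ∈ I, g x = 0}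

/-- `B_u(f, I, ε) = {g ∈ C(X) : sup_{x ∈ X} |f x - g x| < ε and f - g ∈ I}`. -/
def uBall {X : Type*} [TopologicalSpace X] (I : Ideal C(X, ℝ)) (f : C(X, ℝ)) (ε : ℝ) :
    Set C(X, ℝ) :=
  {g | (∃ M, M < ε ∧ ∀ x, |f x - g x| ≤ M) ∧ f - g ∈ I}

/-- The `u^I`-topology on `C(X)`, with open base `{B_u(f, I, ε) : f ∈ C(X), ε > 0}`. -/
def uTopology {X : Type*} [TopologicalSpace X] (I : Ideal C(X, ℝ)) :
    TopologicalSpace C(X, ℝ) :=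
  TopologicalSpace.generateFrom {B | ∃ f ε, 0 < ε ∧ B = uBall I f ε}

/-- `B_m(f, I, u) = {g ∈ C(X) : |f x - g x| < u x for all x ∈ X and f - g ∈ I}`. -/
def mBall {X : Type*} [TopologicalSpace X] (I : Ideal C(X, ℝ)) (f u : C(X, ℝ)) :
    Set C(X, ℝ) :=
  {g | (∀ x, |f x - g x| < u x) ∧ f - g ∈ I}

/-- The `m^I`-topology on `C(X)`, with open base
`{B_m(f, I, u) : f ∈ C(X), u ∈ C₊(X)}`. -/
def mTopology {X : Type*} [TopologicalSpace X] (I : Ideal C(X, ℝ)) :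
    TopologicalSpace C(X, ℝ) :=
  TopologicalSpace.generateFrom {B | ∃ f u, (∀ x, 0 < u x) ∧ B = mBall I f u}

/-- A subset `Y` of `X` is bounded if every `f ∈ C(X)` is bounded on `Y`. -/
def BoundedOn {X : Type*} [TopologicalSpace X] (Y : Set X) : Prop :=
  ∀ f : C(X, ℝ), ∃ M : ℝ, ∀ x ∈ Y, |f x| ≤ M

/-- `X` is `I`-pseudocompact if `X ∖ ⋂ Z[I]` is a bounded subset of `X`. -/
def IPseudocompact {X : Type*} [TopologicalSpace X] (I : Ideal C(X, ℝ)) : Prop :=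
  BoundedOn (zInter I)ᶜ

/-- A subset `S` of `X` is pseudocompact (as a subspace) if every continuous
real-valued function on the subspace `S` is bounded. -/
def PseudocompactOn {X : Type*} [TopologicalSpace X] (S : Set X) : Prop :=
  ∀ g : C(S, ℝ), ∃ M : ℝ, ∀ y : S, |g y| ≤ M

section Helpers

variable {X : Type*} [TopologicalSpace X] (I : Ideal C(X, ℝ))

lemma self_mem_mBall (f u : C(X, ℝ)) (hu : ∀ x, 0 < u x) : f ∈ mBall I f u :=
  ⟨fun x => by simpa using hu x, by simp⟩

lemma mBall_shrink {f u g : C(X, ℝ)} (hg : g ∈ mBall I f u) :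
    ∃ v : C(X, ℝ), (∀ x, 0 < v x) ∧ mBall I g v ⊆ mBall I f u := by
  refine ⟨⟨fun x => u x - |f x - g x|, by fun_prop⟩, fun x => sub_pos.mpr (hg.1 x), ?_⟩
  rintro h ⟨h1, h2⟩
  refine ⟨fun x => ?_, by simpa using add_mem hg.2 h2⟩
  calc |f x - h x| ≤ |f x - g x| + |g x - h x| := abs_sub_le _ _ _
    _ < |f x - g x| + (u x - |f x - g x|) := by have := h1 x; simp only [ContinuousMap.coe_mk] at this; linarith
    _ = u x := by ring

lemma mBasis :
    @IsTopologicalBasis C(X, ℝ) (mTopology I)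
      {B | ∃ f u, (∀ x, 0 < u x) ∧ B = mBall I f u} := by
  letI := mTopology I
  refine ⟨?_, ?_, rfl⟩
  · rintro B₁ ⟨f₁, u₁, hu₁, rfl⟩ B₂ ⟨f₂, u₂, hu₂, rfl⟩ g ⟨hg₁, hg₂⟩
    obtain ⟨v₁, hv₁, hsub₁⟩ := mBall_shrink I hg₁
    obtain ⟨v₂, hv₂, hsub₂⟩ := mBall_shrink I hg₂
    refine ⟨mBall I g (v₁ ⊓ v₂), ⟨g, v₁ ⊓ v₂, fun x => ?_, rfl⟩,
      self_mem_mBall I g _ fun x => ?_, ?_⟩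
    · simp only [ContinuousMap.inf_apply]; exact lt_min (hv₁ x) (hv₂ x)
    · simp only [ContinuousMap.inf_apply]; exact lt_min (hv₁ x) (hv₂ x)
    · intro h hh
      have hle : ∀ w, w ∈ mBall I g (v₁ ⊓ v₂) → w ∈ mBall I g v₁ ∩ mBall I g v₂ := by
        rintro w ⟨hw1, hw2⟩
        refine ⟨⟨fun x => ?_, hw2⟩, ⟨fun x => ?_, hw2⟩⟩
        · exact lt_of_lt_of_le (hw1 x) (by simp [ContinuousMap.inf_apply, inf_le_left])
        · exact lt_of_lt_of_le (hw1 x) (by simp [ContinuousMap.inf_apply, inf_le_right])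
      obtain ⟨w1, w2⟩ := hle h hh
      exact ⟨hsub₁ w1, hsub₂ w2⟩
  · refine eq_univ_of_forall fun f => ?_
    exact ⟨mBall I f 1, ⟨f, 1, fun x => by simp, rfl⟩, self_mem_mBall I f 1 fun x => by simp⟩

lemma mBall_isOpen (f u : C(X, ℝ)) (hu : ∀ x, 0 < u x) :
    IsOpen[mTopology I] (mBall I f u) :=
  isOpen_generateFrom_of_mem ⟨f, u, hu, rfl⟩

end Helpers

section Fwd

variable {X : Type*} [TopologicalSpace X] [T35Space X] (I : Ideal C(X, ℝ))

/-- separating bump functions -/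
lemma exists_bump (x y : X) : ∃ ψ : C(X, ℝ), (∀ z, ψ z ∈ Icc (0:ℝ) 1) ∧
    (x ≠ y → ψ x = 1 ∧ ψ y = 0) := by
  by_cases hxy : x = y
  · exact ⟨1, fun z => by simp, fun h => absurd hxy h⟩
  · obtain ⟨q, qc, hq0, hq1⟩ :=
      CompletelyRegularSpace.completely_regular x {y} isClosed_singleton (by simpa using hxy)
    refine ⟨⟨fun z => 1 - (q z : ℝ), by fun_prop⟩, fun z => ?_, fun _ => ⟨?_, ?_⟩⟩
    · constructor
      · simpa using (q z).2.2
      · simpa using (q z).2.1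
    · simp [hq0]
    · have : q y = 1 := hq1 rfl
      simp [this]

lemma fwd (hY : (zInter I)ᶜ.Infinite) (K : Set C(X, ℝ))
    (hK : @IsCompact C(X, ℝ) (mTopology I) K) :
    @interior C(X, ℝ) (mTopology I) K = ∅ := by
  letI := mTopology I
  by_contra hne
  obtain ⟨g₀, hg₀⟩ := nonempty_iff_ne_empty.mpr hne
  obtain ⟨B, ⟨f₀, u₀, hu₀, rfl⟩, hgB, hBK⟩ :=
    (mBasis I).exists_subset_of_mem_open hg₀ isOpen_interior
  obtain ⟨v, hv, hsub⟩ := mBall_shrink I hgB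
  have hballK : mBall I g₀ v ⊆ K := fun h hh => interior_subset (hBK (hsub hh))
  -- choose infinitely many points
  let e := hY.natEmbedding
  set x : ℕ → X := fun n => (e n : X) with hxdef
  have hxinj : Function.Injective x := fun n m h => e.injective (Subtype.ext h)
  have hxY : ∀ n, x n ∈ (zInter I)ᶜ := fun n => (e n).2
  -- functions in I not vanishing at x n
  have hfn : ∀ n, ∃ f ∈ I, f (x n) ≠ 0 := by
    intro n
    have := hxY n
    simp only [mem_compl_iff, zInter, mem_setOf_eq, not_forall] at this
    obtain ⟨f, hf, hfx⟩ := this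
    exact ⟨f, hf, hfx⟩
  choose fn hfnI hfnx using hfn
  -- bump functions
  have hpsi : ∀ n m : ℕ, ∃ ψ : C(X, ℝ), (∀ z, ψ z ∈ Icc (0:ℝ) 1) ∧
      (x n ≠ x m → ψ (x n) = 1 ∧ ψ (x m) = 0) := fun n m => exists_bump (x n) (x m)
  choose ψ hψmem hψval using hpsi
  -- φ n = product of bumps separating x n from earlier points
  set φ : ℕ → C(X, ℝ) := fun n =>
    ⟨fun z => ∏ m ∈ Finset.range n, ψ n m z,
      continuous_finset_prod _ fun m _ => (ψ n m).continuous⟩ with hφdef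
  have hφapp : ∀ n z, φ n z = ∏ m ∈ Finset.range n, ψ n m z := fun n z => rfl
  have hφ01 : ∀ n z, φ n z ∈ Icc (0:ℝ) 1 := by
    intro n z
    rw [hφapp]
    constructor
    · exact Finset.prod_nonneg fun m _ => (hψmem n m z).1
    · exact Finset.prod_le_one (fun m _ => (hψmem n m z).1) fun m _ => (hψmem n m z).2
  have hφself : ∀ n, φ n (x n) = 1 := by
    intro n
    rw [hφapp]
    refine Finset.prod_eq_one fun m hm => ?_
    exact (hψval n m (fun h => (Nat.lt_irrefl m (by
      simpa [hxinj h] using Finset.mem_range.mp hm)))).1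
  have hφzero : ∀ n m, m < n → φ n (x m) = 0 := by
    intro n m hm
    rw [hφapp]
    refine Finset.prod_eq_zero (Finset.mem_range.mpr hm) ?_
    exact (hψval n m fun h => (Nat.lt_irrefl m (by simpa [hxinj h] using hm))).2
  -- the functions k n
  set a : ℕ → ℝ := fun n => (fn n (x n)) ^ 2 with hadef
  have ha : ∀ n, 0 < a n := fun n => by
    have h := hfnx n
    simp only [hadef]
    positivity
  set r : ℕ → C(X, ℝ) := fun n =>
    ⟨fun z => φ n z * (3 / 4) * v z * fn n z / ((fn n z) ^ 2 + a n / 2), by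
      have hD : ∀ z : X, (fn n z) ^ 2 + a n / 2 ≠ 0 := fun z => by
        have := ha n; positivity
      exact Continuous.div (by fun_prop) (by fun_prop) hD⟩ with hrdef
  set k : ℕ → C(X, ℝ) := fun n => fn n * r n with hkdef
  have hkI : ∀ n, k n ∈ I := fun n => I.mul_mem_right (r n) (hfnI n)
  have hkval : ∀ n z, k n z = φ n z * (3 / 4) * v z * (fn n z) ^ 2 / ((fn n z) ^ 2 + a n / 2) := by
    intro n z
    simp only [hkdef, ContinuousMap.mul_apply, hrdef, ContinuousMap.coe_mk]
    ring
  have hDpos : ∀ n z, (0:ℝ) < (fn n z) ^ 2 + a n / 2 := fun n z => by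
    have := ha n; positivity
  have hk_nonneg : ∀ n z, 0 ≤ k n z := by
    intro n z
    rw [hkval]
    have h1 := (hφ01 n z).1
    have h2 := hv z
    have := (hDpos n z).le
    positivity
  have hk_lt : ∀ n z, k n z < v z := by
    intro n z
    have h01 := hφ01 n z
    have hvz := hv z
    have hfrac : (fn n z) ^ 2 / ((fn n z) ^ 2 + a n / 2) ≤ 1 := by
      rw [div_le_one (hDpos n z)]
      linarith [half_pos (ha n)]
    have hcalc : k n z ≤ 3 / 4 * v z := by
      calc k n z = φ n z * (3 / 4) * v z * ((fn n z) ^ 2 / ((fn n z) ^ 2 + a n / 2)) := by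
            rw [hkval]; ring
        _ ≤ φ n z * (3 / 4) * v z * 1 :=
            mul_le_mul_of_nonneg_left hfrac
              (mul_nonneg (mul_nonneg h01.1 (by norm_num)) hvz.le)
        _ = φ n z * (3 / 4) * v z := by ring
        _ ≤ 1 * (3 / 4) * v z :=
            mul_le_mul_of_nonneg_right (mul_le_mul_of_nonneg_right h01.2 (by norm_num)) hvz.le
        _ = 3 / 4 * v z := by ring
    linarith
  have hkself : ∀ n, k n (x n) = v (x n) / 2 := by
    intro n
    rw [hkval, hφself]
    have han := ha n
    rw [hadef] at han ⊢
    field_simp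
    ring_nf; simp [hfnx n]
  have hkzero : ∀ n m, m < n → k n (x m) = 0 := by
    intro n m hm
    rw [hkval, hφzero n m hm]
    ring
  -- the family h n = g₀ + k n inside the ball
  set hh : ℕ → C(X, ℝ) := fun n => g₀ + k n with hhdef
  have hhK : ∀ n, hh n ∈ K := by
    intro n
    apply hballK
    refine ⟨fun z => ?_, ?_⟩
    · simp only [hhdef, ContinuousMap.add_apply]
      rw [abs_sub_comm]
      have := hk_nonneg n z
      have := hk_lt n z
      rw [show g₀ z + k n z - g₀ z = k n z by ring, abs_of_nonneg (hk_nonneg n z)]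
      exact hk_lt n z
    · simp only [hhdef]
      rw [show g₀ - (g₀ + k n) = -(k n) by ring]
      exact neg_mem (hkI n)
  -- radius v/4 balls and compactness
  set u : C(X, ℝ) := ⟨fun z => v z / 4, by fun_prop⟩ with hudef
  have hupos : ∀ z, 0 < u z := fun z => by
    simp only [hudef, ContinuousMap.coe_mk]; linarith [hv z]
  have hcover : K ⊆ ⋃ p : C(X, ℝ), mBall I p u := fun q _ =>
    mem_iUnion.mpr ⟨q, self_mem_mBall I q u hupos⟩
  obtain ⟨T, hT⟩ := hK.elim_finite_subcover (fun p : C(X, ℝ) => mBall I p u)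
    (fun p => mBall_isOpen I p u hupos) hcover
  have hmem : ∀ n : ℕ, ∃ p ∈ T, hh n ∈ mBall I p u := by
    intro n
    have := hT (hhK n)
    simpa using this
  choose P hPT hPmem using hmem
  obtain ⟨n, m, hnm, hPeq⟩ := Finite.exists_ne_map_eq_of_infinite
    (fun n => (⟨P n, hPT n⟩ : {p // p ∈ T}))
  have hPeq' : P n = P m := by simpa using hPeq
  -- wlog n < m; contradiction at the point x (min n m)
  have key : ∀ n m : ℕ, n < m → P n = P m → False := by
    intro n m hlt hP
    have h1 := (hPmem n).1 (x n)
    have h2 := (hPmem m).1 (x n)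
    rw [hP] at h1
    have hsep : |hh n (x n) - hh m (x n)| = v (x n) / 2 := by
      simp only [hhdef, ContinuousMap.add_apply]
      rw [hkself n, hkzero m n hlt]
      rw [show g₀ (x n) + v (x n) / 2 - (g₀ (x n) + 0) = v (x n) / 2 by ring]
      exact abs_of_pos (by linarith [hv (x n)])
    have htri : |hh n (x n) - hh m (x n)| ≤ |P m (x n) - hh n (x n)| + |P m (x n) - hh m (x n)| := by
      rw [abs_sub_comm (P m (x n)) (hh n (x n))]
      exact abs_sub_le _ _ _
    have huv : u (x n) = v (x n) / 4 := rfl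
    rw [huv] at h1 h2
    rw [hsep] at htri
    linarith
  rcases lt_or_gt_of_ne hnm with h | h
  · exact key n m h hPeq'
  · exact key m n h hPeq'.symm

end Fwd

section Bwd

variable {X : Type*} [TopologicalSpace X] (I : Ideal C(X, ℝ))

lemma bwd (hfin : (zInter I)ᶜ.Finite) :
    ∃ K : Set C(X, ℝ), @IsCompact C(X, ℝ) (mTopology I) K ∧
      (@interior C(X, ℝ) (mTopology I) K).Nonempty := by
  classical
  letI := mTopology I
  haveI : Fintype ↥(zInter I)ᶜ := hfin.fintype
  -- I as a real subspace
  set V : Submodule ℝ C(X, ℝ) :=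
    Submodule.restrictScalars ℝ (I : Submodule C(X, ℝ) C(X, ℝ)) with hVdef
  have hVmem : ∀ h : C(X, ℝ), h ∈ V ↔ h ∈ I := fun h => Iff.rfl
  have hzero : ∀ h : C(X, ℝ), h ∈ I → ∀ z ∈ zInter I, h z = 0 := fun h hh z hz => hz h hh
  -- evaluation map
  set ev : V →ₗ[ℝ] (↥(zInter I)ᶜ → ℝ) :=
    { toFun := fun h y => (h : C(X, ℝ)) (y : X)
      map_add' := fun h₁ h₂ => by ext y; simp
      map_smul' := fun c h => by ext y; simp } with hevdef
  have hevinj : Function.Injective ev := by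
    intro h₁ h₂ hev
    apply Subtype.ext
    ext z
    by_cases hz : z ∈ zInter I
    · rw [hzero _ h₁.2 z hz, hzero _ h₂.2 z hz]
    · have : ev h₁ ⟨z, hz⟩ = ev h₂ ⟨z, hz⟩ := by rw [hev]
      simpa [hevdef] using this
  haveI : FiniteDimensional ℝ V := FiniteDimensional.of_injective ev hevinj
  -- basis and parametrization
  set d := Module.finrank ℝ V with hddef
  set b : Module.Basis (Fin d) ℝ V := Module.finBasis ℝ V with hbdef
  set Θ : (Fin d → ℝ) → C(X, ℝ) := fun c => ((b.equivFun.symm c : V) : C(X, ℝ)) with hΘdef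
  have hΘmem : ∀ c, Θ c ∈ I := fun c => (b.equivFun.symm c).2
  have hΘsurj : ∀ h : C(X, ℝ), h ∈ I → ∃ c, Θ c = h := by
    intro h hh
    refine ⟨b.equivFun ⟨h, hh⟩, ?_⟩
    have he : b.equivFun.symm (b.equivFun ⟨h, hh⟩) = ⟨h, hh⟩ := b.equivFun.symm_apply_apply _
    simp only [hΘdef, he]
  have hΘeval : ∀ c (z : X), Θ c z = ∑ i, c i * ((b i : C(X, ℝ)) z) := by
    intro c z
    simp only [hΘdef, Module.Basis.equivFun_symm_apply]
    rw [show ((((∑ i, c i • b i : V)) : C(X, ℝ))) = ∑ i, c i • ((b i : V) : C(X, ℝ)) by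
      simp]
    simp [ContinuousMap.coe_sum]
  have hΘevalcont : ∀ z : X, Continuous fun c => Θ c z := by
    intro z
    simp only [hΘeval]
    exact continuous_finset_sum _ fun i _ => (continuous_apply i).mul continuous_const
  have hΘzero : ∀ c, ∀ z ∈ zInter I, Θ c z = 0 := fun c z hz => hz _ (hΘmem c)
  -- continuity of Θ
  have hΘcont : Continuous[_, mTopology I] Θ := by
    apply continuous_generateFrom_iff.mpr
    rintro B ⟨f, u, hu, rfl⟩
    by_cases hf : f ∈ I
    · have heq : Θ ⁻¹' mBall I f u = ⋂ y : ↥(zInter I)ᶜ, {c | |f y - Θ c y| < u y} := by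
        ext c
        simp only [mem_preimage, mem_iInter, mem_setOf_eq]
        constructor
        · intro hc y
          exact hc.1 y
        · intro hc
          refine ⟨fun z => ?_, ?_⟩
          · by_cases hz : z ∈ zInter I
            · have h1 : f z = 0 := hz f hf
              have h2 : Θ c z = 0 := hΘzero c z hz
              rw [h1, h2]
              simpa using hu z
            · exact hc ⟨z, hz⟩
          · exact Submodule.sub_mem _ hf (hΘmem c)
      rw [heq]
      refine isOpen_iInter_of_finite fun y => ?_
      have : Continuous fun c => |f (y : X) - Θ c y| :=
        (continuous_const.sub (hΘevalcont y)).abs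
      exact isOpen_lt this continuous_const
    · have heq : Θ ⁻¹' mBall I f u = ∅ := by
        ext c
        simp only [mem_preimage, mem_empty_iff_false, iff_false]
        intro hc
        exact hf (by simpa using add_mem hc.2 (hΘmem c))
      rw [heq]
      exact isOpen_empty
  -- the compact parameter set
  set A : (Fin d → ℝ) →ₗ[ℝ] (↥(zInter I)ᶜ → ℝ) := ev ∘ₗ (b.equivFun.symm : _ ≃ₗ[ℝ] _).toLinearMap
    with hAdef
  have hAeval : ∀ c y, A c y = Θ c (y : X) := fun c y => rfl
  have hAinj : LinearMap.ker A = ⊥ := by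
    rw [LinearMap.ker_eq_bot]
    exact hevinj.comp b.equivFun.symm.injective
  have hA : Topology.IsClosedEmbedding A := LinearMap.isClosedEmbedding_of_injective hAinj
  set S : Set (Fin d → ℝ) := A ⁻¹' (univ.pi fun _ => Icc (-1 : ℝ) 1) with hSdef
  have hScomp : IsCompact S := hA.isCompact_preimage (isCompact_univ_pi fun _ => isCompact_Icc)
  -- the compact set K
  set K : Set C(X, ℝ) := {h | h ∈ I ∧ ∀ z, |h z| ≤ 1} with hKdef
  have hKim : K = Θ '' S := by
    ext h
    constructor
    · rintro ⟨hhI, hb⟩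
      obtain ⟨c, rfl⟩ := hΘsurj h hhI
      refine ⟨c, ?_, rfl⟩
      simp only [hSdef, mem_preimage, mem_univ_pi]
      intro y
      rw [hAeval]
      exact mem_Icc.mpr (abs_le.mp (hb y))
    · rintro ⟨c, hc, rfl⟩
      refine ⟨hΘmem c, fun z => ?_⟩
      by_cases hz : z ∈ zInter I
      · rw [hΘzero c z hz]; norm_num
      · simp only [hSdef, mem_preimage, mem_univ_pi] at hc
        have := mem_Icc.mp (hc ⟨z, hz⟩)
        rw [hAeval] at this
        exact abs_le.mpr this
  have hKcomp : IsCompact K := by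
    rw [hKim]
    exact hScomp.image hΘcont
  refine ⟨K, hKcomp, ⟨0, ?_⟩⟩
  rw [mem_interior]
  refine ⟨mBall I 0 1, ?_, ?_, ?_⟩
  · rintro q ⟨hq1, hq2⟩
    refine ⟨by simpa using neg_mem hq2, fun z => ?_⟩
    have := hq1 z
    simp only [ContinuousMap.zero_apply, zero_sub, abs_neg, ContinuousMap.one_apply] at this
    linarith
  · exact isOpen_generateFrom_of_mem ⟨0, 1, fun x => by simp, rfl⟩
  · exact ⟨fun x => by simp, by simp⟩

end Bwd

/-- `X ∖ ⋂ Z[I]` is infinite if and only if every compact subset of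
`C(X)` with the `m^I`-topology has empty interior. -/
theorem stmt_15 {X : Type*} [TopologicalSpace X] [T35Space X] (I : Ideal C(X, ℝ)) :
    (zInter I)ᶜ.Infinite ↔
      ∀ K : Set C(X, ℝ), @IsCompact C(X, ℝ) (mTopology I) K →
        @interior C(X, ℝ) (mTopology I) K = ∅ := by
  constructor
  · intro hY K hK
    exact fwd I hY K hK
  · intro h
    by_contra hfin
    obtain ⟨K, hKc, hKint⟩ := bwd I (Set.not_infinite.mp hfin)
    rw [h K hKc] at hKint
    exact Set.not_nonempty_empty hKint
end

section
/- Let I be an ideal of C(X). In the space C(X) with the u^I-topology, the path component of the zero function and the connected component of the zero function both equal C*(X) ∩ I, where C*(X) is the set of bounded functions in C(X). -/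
open Set Topology TopologicalSpace Pointwise

section Aux

variable {X : Type*} [TopologicalSpace X] (I : Ideal C(X, ℝ))

lemma uBall_isOpen (f : C(X, ℝ)) {ε : ℝ} (hε : 0 < ε) :
    IsOpen[uTopology I] (uBall I f ε) :=
  TopologicalSpace.isOpen_generateFrom_of_mem ⟨f, ε, hε, rfl⟩

lemma self_mem_uBall (f : C(X, ℝ)) {ε : ℝ} (hε : 0 < ε) : f ∈ uBall I f ε :=
  ⟨⟨0, hε, fun x => by simp⟩, by simp⟩

lemma isClopen_star_inter :
    @IsClopen _ (uTopology I)
      ({f : C(X, ℝ) | ∃ M : ℝ, ∀ x : X, |f x| ≤ M} ∩ (I : Set C(X, ℝ))) := by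
  set S := {f : C(X, ℝ) | ∃ M : ℝ, ∀ x : X, |f x| ≤ M} ∩ (I : Set C(X, ℝ)) with hS
  constructor
  · -- closed: complement is open
    rw [← @isOpen_compl_iff _ _ (uTopology I)] at *
    have : Sᶜ = ⋃ f ∈ Sᶜ, uBall I f 1 := by
      apply Set.Subset.antisymm
      · intro f hf
        exact Set.mem_biUnion hf (self_mem_uBall I f one_pos)
      · rintro g hg
        simp only [Set.mem_iUnion] at hg
        obtain ⟨f, hf, ⟨⟨M, hM1, hMb⟩, hfgI⟩⟩ := hg
        intro hgS
        apply hf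
        obtain ⟨⟨Mg, hMg⟩, hgI⟩ := hgS
        refine ⟨⟨M + Mg, fun x => ?_⟩, ?_⟩
        · calc |f x| = |(f x - g x) + g x| := by ring_nf
            _ ≤ |f x - g x| + |g x| := abs_add_le _ _
            _ ≤ M + Mg := add_le_add (hMb x) (hMg x)
        · have := I.add_mem hfgI hgI
          rwa [sub_add_cancel] at this
    rw [this]
    exact @isOpen_biUnion _ _ (uTopology I) _ _ fun f _ => uBall_isOpen I f one_pos
  · -- open
    have : S = ⋃ f ∈ S, uBall I f 1 := by
      apply Set.Subset.antisymm
      · intro f hf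
        exact Set.mem_biUnion hf (self_mem_uBall I f one_pos)
      · rintro g hg
        simp only [Set.mem_iUnion] at hg
        obtain ⟨f, ⟨⟨Mf, hMf⟩, hfI⟩, ⟨⟨M, hM1, hMb⟩, hfgI⟩⟩ := hg
        refine ⟨⟨M + Mf, fun x => ?_⟩, ?_⟩
        · calc |g x| = |(g x - f x) + f x| := by ring_nf
            _ ≤ |g x - f x| + |f x| := abs_add_le _ _
            _ ≤ M + Mf := add_le_add (by rw [abs_sub_comm]; exact hMb x) (hMf x)
        · have := I.sub_mem hfI hfgI
          rwa [sub_sub_cancel] at this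
    rw [this]
    exact @isOpen_biUnion _ _ (uTopology I) _ _ fun f _ => uBall_isOpen I f one_pos

lemma path_continuous {f : C(X, ℝ)} (hfI : f ∈ I) {Mf : ℝ} (hMf : ∀ x, |f x| ≤ Mf) :
    @Continuous unitInterval C(X, ℝ) _ (uTopology I) (fun t => (t : ℝ) • f) := by
  rw [uTopology, continuous_generateFrom_iff]
  rintro B ⟨g, ε, hε, rfl⟩
  set Mf' : ℝ := |Mf| + 1 with hMf'
  have hMf'pos : 0 < Mf' := by positivity
  have hMfle : Mf ≤ Mf' := le_trans (le_abs_self _) (by linarith)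
  have hS : IsOpen {t : ℝ | (∃ M, M < ε ∧ ∀ x, |g x - t * f x| ≤ M) ∧ g - t • f ∈ I} := by
    rw [Metric.isOpen_iff]
    rintro t₀ ⟨⟨M, hMε, hMb⟩, hI₀⟩
    have hεM : 0 < ε - M := by linarith
    refine ⟨(ε - M) / (2 * Mf'), by positivity, fun t ht => ?_⟩
    rw [Metric.mem_ball, Real.dist_eq] at ht
    constructor
    · refine ⟨M + (ε - M) / 2, by linarith, fun x => ?_⟩
      have h1 : |g x - t * f x| ≤ |g x - t₀ * f x| + |t - t₀| * |f x| := by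
        calc |g x - t * f x| = |(g x - t₀ * f x) + (t₀ - t) * f x| := by ring_nf
          _ ≤ |g x - t₀ * f x| + |(t₀ - t) * f x| := abs_add_le _ _
          _ = |g x - t₀ * f x| + |t₀ - t| * |f x| := by rw [abs_mul]
          _ = |g x - t₀ * f x| + |t - t₀| * |f x| := by rw [abs_sub_comm t₀ t]
      have h2 : |t - t₀| * |f x| ≤ (ε - M) / (2 * Mf') * Mf' := by
        apply mul_le_mul (le_of_lt ht) (le_trans (hMf x) hMfle) (abs_nonneg _)
        positivity
      have h2' : 0 ≤ (ε - M) / (2 * Mf') := by positivity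
      have h3 : (ε - M) / (2 * Mf') * Mf' = (ε - M) / 2 := by
        field_simp
      have := hMb x
      rw [h3] at h2
      linarith
    · have heq : g - t • f = (g - t₀ • f) + (t₀ - t) • f := by
        rw [sub_smul]; abel
      rw [heq]
      refine I.add_mem hI₀ ?_
      rw [Algebra.smul_def]
      exact I.mul_mem_left _ hfI
  have hpre : (fun t : unitInterval => (t : ℝ) • f) ⁻¹' uBall I g ε =
      Subtype.val ⁻¹' {t : ℝ | (∃ M, M < ε ∧ ∀ x, |g x - t * f x| ≤ M) ∧ g - t • f ∈ I} := by
    ext t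
    simp only [uBall, Set.mem_preimage, Set.mem_setOf_eq, ContinuousMap.coe_smul,
      Pi.smul_apply, smul_eq_mul]
  rw [hpre]
  exact hS.preimage continuous_subtype_val

end Aux

/-- in `C(X)` with the `u^I`-topology, the path component and the
connected component of `0` both equal `C*(X) ∩ I`. -/
theorem stmt_16 {X : Type*} [TopologicalSpace X] [T35Space X] (I : Ideal C(X, ℝ)) :
    @pathComponent C(X, ℝ) (uTopology I) 0 =
        {f : C(X, ℝ) | ∃ M : ℝ, ∀ x : X, |f x| ≤ M} ∩ (I : Set C(X, ℝ)) ∧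
    @connectedComponent C(X, ℝ) (uTopology I) 0 =
        {f : C(X, ℝ) | ∃ M : ℝ, ∀ x : X, |f x| ≤ M} ∩ (I : Set C(X, ℝ)) := by
  letI := uTopology I
  set S := {f : C(X, ℝ) | ∃ M : ℝ, ∀ x : X, |f x| ≤ M} ∩ (I : Set C(X, ℝ)) with hSdef
  have hsub : S ⊆ pathComponent (0 : C(X, ℝ)) := by
    rintro f ⟨⟨Mf, hMf⟩, hfI⟩
    have hcont := path_continuous I hfI hMf
    have hJ : Joined (0 : C(X, ℝ)) f :=
      ⟨⟨⟨fun t => (t : ℝ) • f, hcont⟩, by simp, by simp⟩⟩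
    exact hJ.mem_pathComponent (mem_pathComponent_self 0)
  have hsub2 : connectedComponent (0 : C(X, ℝ)) ⊆ S :=
    (isClopen_star_inter I).connectedComponent_subset
      ⟨⟨0, fun x => by simp⟩, I.zero_mem⟩
  have hsub1 : pathComponent (0 : C(X, ℝ)) ⊆ connectedComponent 0 :=
    pathComponent_subset_component 0
  constructor
  · exact Set.Subset.antisymm (hsub1.trans hsub2) hsub
  · exact Set.Subset.antisymm hsub2 (hsub.trans hsub1)
end

section
/- Let I be an ideal of C(X). In the space C(X) with the m^I-topology, the path component of the zero function and the connected component of the zero function both equal C_ψ(X) ∩ I, where C_ψ(X) is the set of all f ∈ C(X) whose support cl_X({x ∈ X : f(x) ≠ 0}) is a pseudocompact subspace of X. -/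
open Set Topology TopologicalSpace Pointwise

section Aux

variable {X : Type*} [TopologicalSpace X]

/-- Bound from pseudocompact support. -/
lemma bound_of_psc (g u : C(X, ℝ)) (hg : PseudocompactOn (closure {x : X | g x ≠ 0}))
    (hu : ∀ x, 0 < u x) : ∃ M : ℝ, 0 ≤ M ∧ ∀ x, |g x| ≤ M * u x := by
  set S := closure {x : X | g x ≠ 0} with hS
  have hq : Continuous fun y : S => g y / u y := by
    apply Continuous.div
    · exact g.continuous.comp continuous_subtype_val
    · exact u.continuous.comp continuous_subtype_val
    · exact fun y => (hu y).ne'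
  obtain ⟨M, hM⟩ := hg ⟨_, hq⟩
  refine ⟨max M 0, le_max_right _ _, fun x => ?_⟩
  by_cases hx : g x = 0
  · rw [hx, abs_zero]
    exact mul_nonneg (le_max_right _ _) (hu x).le
  · have hxS : x ∈ S := subset_closure hx
    have := hM ⟨x, hxS⟩
    simp only [ContinuousMap.coe_mk] at this
    rw [abs_div, abs_of_pos (hu x), div_le_iff₀ (hu x)] at this
    calc |g x| ≤ M * u x := this
      _ ≤ max M 0 * u x := mul_le_mul_of_nonneg_right (le_max_left _ _) (hu x).le

lemma mem_mBall_self (I : Ideal C(X, ℝ)) (f u : C(X, ℝ)) (hu : ∀ x, 0 < u x) :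
    f ∈ mBall I f u := by
  refine ⟨fun x => ?_, by simp⟩
  simp [hu x]

lemma isOpen_mBall (I : Ideal C(X, ℝ)) (f u : C(X, ℝ)) (hu : ∀ x, 0 < u x) :
    IsOpen[mTopology I] (mBall I f u) :=
  TopologicalSpace.GenerateOpen.basic _ ⟨f, u, hu, rfl⟩

lemma isClopen_ideal (I : Ideal C(X, ℝ)) : @IsClopen _ (mTopology I) (I : Set C(X, ℝ)) := by
  constructor
  · rw [← @isOpen_compl_iff _ _ (mTopology I)]
    have : (I : Set C(X, ℝ))ᶜ = ⋃ f ∈ (I : Set C(X, ℝ))ᶜ, mBall I f 1 := by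
      ext g
      simp only [mem_iUnion]
      constructor
      · intro hg
        exact ⟨g, hg, mem_mBall_self I g 1 (fun _ => one_pos)⟩
      · rintro ⟨f, hf, hgf⟩
        intro hgI
        exact hf (by simpa using I.add_mem hgf.2 hgI)
    rw [this]
    exact @isOpen_biUnion _ _ (mTopology I) _ _ (fun f _ => isOpen_mBall I f 1 (fun _ => one_pos))
  · have : (I : Set C(X, ℝ)) = ⋃ f ∈ (I : Set C(X, ℝ)), mBall I f 1 := by
      ext g
      simp only [mem_iUnion]
      constructor
      · intro hg
        exact ⟨g, hg, mem_mBall_self I g 1 (fun _ => one_pos)⟩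
      · rintro ⟨f, hf, hgf⟩
        simpa using I.sub_mem hf hgf.2
    rw [this]
    exact @isOpen_biUnion _ _ (mTopology I) _ _ (fun f hf => isOpen_mBall I f 1 (fun _ => one_pos))

/-- The set of functions dominated by multiples of `w`. -/
def Ew (w : C(X, ℝ)) : Set C(X, ℝ) := {g | ∃ M : ℝ, ∀ x, |g x| ≤ M * w x}

lemma isClopen_Ew (I : Ideal C(X, ℝ)) (w : C(X, ℝ)) (hw : ∀ x, 0 < w x) :
    @IsClopen _ (mTopology I) (Ew w) := by
  letI : TopologicalSpace C(X, ℝ) := mTopology I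
  constructor
  · rw [← @isOpen_compl_iff _ _ (mTopology I)]
    have : (Ew w)ᶜ = ⋃ f ∈ (Ew w)ᶜ, mBall I f w := by
      ext g
      simp only [mem_iUnion]
      constructor
      · intro hg
        exact ⟨g, hg, mem_mBall_self I g w hw⟩
      · rintro ⟨f, hf, hgf⟩ ⟨M, hM⟩
        refine hf ⟨M + 1, fun x => ?_⟩
        calc |f x| ≤ |g x| + |f x - g x| := by
              have := abs_sub_abs_le_abs_sub (f x) (g x); linarith [abs_sub_comm (f x) (g x)]
          _ ≤ M * w x + w x := add_le_add (hM x) (hgf.1 x).le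
          _ = (M + 1) * w x := by ring
    rw [this]
    exact @isOpen_biUnion _ _ (mTopology I) _ _ (fun f _ => isOpen_mBall I f w hw)
  · have : Ew w = ⋃ f ∈ Ew w, mBall I f w := by
      ext g
      simp only [mem_iUnion]
      constructor
      · intro hg
        exact ⟨g, hg, mem_mBall_self I g w hw⟩
      · rintro ⟨f, ⟨M, hM⟩, hgf⟩
        refine ⟨M + 1, fun x => ?_⟩
        calc |g x| ≤ |f x| + |f x - g x| := by
              have := abs_sub_abs_le_abs_sub (g x) (f x); linarith [abs_sub_comm (f x) (g x)]
          _ ≤ M * w x + w x := add_le_add (hM x) (hgf.1 x).le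
          _ = (M + 1) * w x := by ring
    rw [this]
    exact @isOpen_biUnion _ _ (mTopology I) _ _ (fun f _ => isOpen_mBall I f w hw)

end Aux

section PathPart

variable {X : Type*} [TopologicalSpace X]

lemma joined_zero (I : Ideal C(X, ℝ)) (f : C(X, ℝ)) (hfI : f ∈ I)
    (hfp : PseudocompactOn (closure {x : X | f x ≠ 0})) :
    @Joined C(X, ℝ) (mTopology I) 0 f := by
  set S := closure {x : X | f x ≠ 0} with hSdef
  set γ : unitInterval → C(X, ℝ) := fun t => (t : ℝ) • f with hγ
  have hcont : @Continuous _ _ _ (mTopology I) γ := by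
    rw [mTopology, continuous_generateFrom_iff]
    rintro B ⟨p, u, hu, rfl⟩
    rcases (γ ⁻¹' mBall I p u).eq_empty_or_nonempty with he | ⟨t₀, ht₀⟩
    · rw [he]; exact isOpen_empty
    · have hidl : ∀ t : unitInterval, p - (t : ℝ) • f ∈ I := by
        intro t
        have h1 : p - (t : ℝ) • f = (p - (t₀ : ℝ) • f) + ((t₀ : ℝ) - (t : ℝ)) • f := by
          module
        rw [h1]
        refine I.add_mem ht₀.2 ?_
        rw [Algebra.smul_def]
        exact I.mul_mem_left _ hfI
      have hset : γ ⁻¹' mBall I p u = {t : unitInterval | ∀ x, |p x - (t : ℝ) * f x| < u x} := by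
        ext t
        simp only [mem_preimage, mBall, mem_setOf_eq, hγ]
        constructor
        · intro h
          intro x
          simpa using h.1 x
        · intro h
          exact ⟨fun x => by simpa using h x, hidl t⟩
      rw [hset]
      rw [Metric.isOpen_iff]
      intro t₁ ht₁
      by_cases hS : S = ∅
      · refine ⟨1, one_pos, fun t _ => ?_⟩
        intro x
        have hf0 : f x = 0 := by
          by_contra h
          have : x ∈ S := subset_closure h
          simp [hS] at this
        simpa [hf0] using ht₁ x
      · obtain ⟨y₀, hy₀⟩ := nonempty_iff_ne_empty.2 hS
        obtain ⟨M₁, hM₁0, hM₁⟩ := bound_of_psc f 1 hfp (fun _ => one_pos)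
        have hpos : ∀ y : S, 0 < u y - |p y - (t₁ : ℝ) * f y| := fun y => sub_pos.2 (ht₁ y)
        have hqc : Continuous fun y : S => (u y.1 - |p y.1 - (t₁ : ℝ) * f y.1|)⁻¹ := by
          refine Continuous.inv₀ ?_ (fun y => (hpos y).ne')
          fun_prop
        obtain ⟨M₂, hM₂⟩ := hfp ⟨_, hqc⟩
        have hM₂0 : 0 < M₂ + 1 := by
          have h0 := hM₂ ⟨y₀, hy₀⟩
          have := abs_nonneg ((u y₀ - |p y₀ - (t₁ : ℝ) * f y₀|)⁻¹)
          simp only [ContinuousMap.coe_mk] at h0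
          nlinarith
        have hgap : ∀ y : S, (M₂ + 1)⁻¹ ≤ u y.1 - |p y.1 - (t₁ : ℝ) * f y.1| := by
          intro y
          have h1 := hM₂ y
          simp only [ContinuousMap.coe_mk] at h1
          set d := u y.1 - |p y.1 - (t₁ : ℝ) * f y.1| with hd
          have hd0 : 0 < d := hpos y
          have h2 : d⁻¹ ≤ M₂ := le_trans (le_abs_self _) h1
          have h3 : 1 ≤ M₂ * d := by
            have h4 := mul_le_mul_of_nonneg_right h2 hd0.le
            rwa [inv_mul_cancel₀ hd0.ne'] at h4
          rw [inv_eq_one_div, div_le_iff₀ hM₂0]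
          nlinarith
        set δ := (M₂ + 1)⁻¹ / (M₁ + 1) with hδ
        have hδpos : 0 < δ := div_pos (inv_pos.2 hM₂0) (by linarith)
        refine ⟨δ, hδpos, fun t ht => ?_⟩
        simp only [Metric.mem_ball, Subtype.dist_eq, Real.dist_eq] at ht
        intro x
        by_cases hx : f x = 0
        · have := ht₁ x
          simpa [hx] using this
        · have hxS : x ∈ S := subset_closure hx
          have h3 : |p x - (t : ℝ) * f x| ≤ |p x - (t₁ : ℝ) * f x| + |(t₁ : ℝ) - t| * |f x| := by
            have : p x - (t : ℝ) * f x = (p x - (t₁ : ℝ) * f x) + ((t₁ : ℝ) - t) * f x := by ring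
            rw [this]
            calc |(p x - (t₁ : ℝ) * f x) + ((t₁ : ℝ) - t) * f x|
                ≤ |p x - (t₁ : ℝ) * f x| + |((t₁ : ℝ) - t) * f x| := abs_add_le _ _
              _ = |p x - (t₁ : ℝ) * f x| + |(t₁ : ℝ) - t| * |f x| := by rw [abs_mul]
          have h4 : |(t₁ : ℝ) - t| * |f x| < (M₂ + 1)⁻¹ := by
            have hfb : |f x| ≤ M₁ + 1 := by
              have := hM₁ x
              simp only [ContinuousMap.one_apply, mul_one] at this
              linarith
            calc |(t₁ : ℝ) - t| * |f x| ≤ |(t₁ : ℝ) - t| * (M₁ + 1) :=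
                  mul_le_mul_of_nonneg_left hfb (abs_nonneg _)
              _ < δ * (M₁ + 1) := by
                  rw [abs_sub_comm] at ht
                  exact mul_lt_mul_of_pos_right ht (by linarith)
              _ = (M₂ + 1)⁻¹ := div_mul_cancel₀ _ (by linarith)
          have h5 := hgap ⟨x, hxS⟩
          show |p x - (t : ℝ) * f x| < u x
          linarith
  refine ⟨@Path.mk _ (mTopology I) 0 f (@ContinuousMap.mk _ _ _ (mTopology I) γ hcont) ?_ ?_⟩
  · simp [hγ]
  · simp [hγ]

end PathPart

section Hard

variable {X : Type*} [TopologicalSpace X]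

set_option maxHeartbeats 2000000 in
lemma hard_lemma [T35Space X] (g : C(X, ℝ))
    (hb : ∀ w : C(X, ℝ), (∀ x, 0 < w x) → ∃ M : ℝ, ∀ x, |g x| ≤ M * w x) :
    PseudocompactOn (closure {x : X | g x ≠ 0}) := by
  set S := closure {x : X | g x ≠ 0} with hSdef
  by_contra hnp
  unfold PseudocompactOn at hnp
  push_neg at hnp
  obtain ⟨h, hh⟩ := hnp
  choose Y hY using hh
  set y : ℕ → S := fun n => Nat.rec (Y 0) (fun _ prev => Y (|h prev| + 1)) n with hy
  set A : ℕ → ℝ := fun n => |h (y n)| with hA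
  have hstep : ∀ n, A n + 1 < A (n + 1) := fun n => hY (A n + 1)
  have hmono : ∀ m n, m < n → A m + 1 ≤ A n := by
    intro m n hmn
    induction n with
    | zero => omega
    | succ k ih =>
      rcases Nat.lt_succ_iff_lt_or_eq.mp hmn with h' | h'
      · have := ih h'; linarith [hstep k]
      · subst h'; linarith [hstep m]
  have hgapA : ∀ m n, m ≠ n → 1 ≤ |A m - A n| := by
    intro m n hne
    rcases hne.lt_or_gt with h' | h'
    · have := hmono m n h'
      rw [abs_sub_comm, abs_of_nonneg (by linarith)]; linarith
    · have := hmono n m h'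
      rw [abs_of_nonneg (by linarith)]; linarith
  have hOopen : ∀ n, IsOpen {z : S | |(|h z| - A n)| < 4⁻¹} := by
    intro n
    exact isOpen_lt (((h.continuous).abs.sub continuous_const).abs) continuous_const
  have hgetV := fun n => isOpen_induced_iff.mp (hOopen n)
  choose V hVopen hVeq using hgetV
  have hx : ∀ n, ∃ x : X, x ∈ V n ∧ g x ≠ 0 := by
    intro n
    have hyO : y n ∈ {z : S | |(|h z| - A n)| < 4⁻¹} := by
      simp only [mem_setOf_eq, hA, sub_self, abs_zero]
      norm_num
    have hyn : (y n : X) ∈ V n := by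
      rw [← hVeq n] at hyO; exact hyO
    have hcl : (y n : X) ∈ closure {x : X | g x ≠ 0} := (y n).2
    rcases mem_closure_iff.mp hcl (V n) (hVopen n) hyn with ⟨x, hxV, hxg⟩
    exact ⟨x, hxV, hxg⟩
  choose x hxV hxg using hx
  set W : ℕ → Set X := fun n => V n ∩ {z : X | |g (x n)| / 2 < |g z|} with hW
  have hWopen : ∀ n, IsOpen (W n) :=
    fun n => (hVopen n).inter (isOpen_lt continuous_const (g.continuous.abs))
  have hgx : ∀ n, 0 < |g (x n)| := fun n => abs_pos.2 (hxg n)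
  have hWx : ∀ n, x n ∈ W n := fun n => ⟨hxV n, by simpa using half_lt_self (hgx n)⟩
  have hφex : ∀ n, ∃ φ : X → ℝ, Continuous φ ∧ φ (x n) = 1 ∧ (∀ z ∉ W n, φ z = 0) ∧
      ∀ z, 0 ≤ φ z ∧ φ z ≤ 1 := by
    intro n
    obtain ⟨f0, hf0c, hf0x, hf0K⟩ := CompletelyRegularSpace.completely_regular (x n) (W n)ᶜ
      (hWopen n).isClosed_compl (by simp [hWx n])
    refine ⟨fun z => 1 - (f0 z : ℝ), by continuity, by simp [hf0x], ?_, ?_⟩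
    · intro z hz
      have := hf0K hz
      simp only [this]
      norm_num
    · intro z
      have h1 := unitInterval.le_one (f0 z)
      have h2 := unitInterval.nonneg (f0 z)
      refine ⟨?_, ?_⟩
      · show (0:ℝ) ≤ 1 - (f0 z : ℝ)
        linarith
      · show (1:ℝ) - (f0 z : ℝ) ≤ 1
        linarith
  choose φ hφc hφx hφ0 hφb using hφex
  have hkey : ∀ (z : X) (n : ℕ), φ n z ≠ 0 →
      ∃ hz : z ∈ S, |(|h ⟨z, hz⟩| - A n)| < 4⁻¹ ∧ g z ≠ 0 := by
    intro z n hph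
    have hzW : z ∈ W n := by
      by_contra hc
      exact hph (hφ0 n z hc)
    have hgz : g z ≠ 0 := by
      have := hzW.2
      simp only [mem_setOf_eq] at this
      intro h0
      rw [h0, abs_zero] at this
      linarith [hgx n]
    have hzS : z ∈ S := subset_closure hgz
    refine ⟨hzS, ?_, hgz⟩
    have : (⟨z, hzS⟩ : S) ∈ Subtype.val ⁻¹' V n := hzW.1
    rw [hVeq n] at this
    exact this
  have huniq : ∀ (z : X) (m n : ℕ), φ m z ≠ 0 → φ n z ≠ 0 → m = n := by
    intro z m n hm hn
    obtain ⟨hz, hm', _⟩ := hkey z m hm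
    obtain ⟨hz', hn', _⟩ := hkey z n hn
    by_contra hne
    have h1 := hgapA m n hne
    have h2 : |A m - A n| ≤ |(|h ⟨z, hz⟩| - A m)| + |(|h ⟨z, hz⟩| - A n)| := by
      rw [abs_sub_comm (|h ⟨z, hz⟩|) (A m)]
      exact abs_sub_le (A m) (|h ⟨z, hz⟩|) (A n)
    norm_num at hm' hn'
    linarith
  set c : ℕ → ℝ := fun n => n / |g (x n)| with hc
  have hc0 : ∀ n, 0 ≤ c n := fun n => div_nonneg (Nat.cast_nonneg n) (abs_nonneg _)
  set s : X → ℝ := fun z => ∑' n, c n * φ n z with hs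
  have hsval : ∀ (z : X) (n₀ : ℕ), φ n₀ z ≠ 0 → s z = c n₀ * φ n₀ z := by
    intro z n₀ h0
    refine tsum_eq_single n₀ (fun n hn => ?_)
    by_cases hφn : φ n z = 0
    · rw [hφn, mul_zero]
    · exact absurd (huniq z n n₀ hφn h0) hn
  have hszero : ∀ z : X, (∀ n, φ n z = 0) → s z = 0 := by
    intro z hz
    simp only [hs, hz, mul_zero, tsum_zero]
  have hsnonneg : ∀ z, 0 ≤ s z := by
    intro z
    by_cases hz : ∀ n, φ n z = 0
    · rw [hszero z hz]
    · push_neg at hz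
      obtain ⟨n₀, h0⟩ := hz
      rw [hsval z n₀ h0]
      exact mul_nonneg (hc0 n₀) (hφb n₀ z).1
  have hscont : Continuous s := by
    rw [continuous_iff_continuousAt]
    intro z
    by_cases hzS : z ∈ S
    · obtain ⟨V', hV'open, hV'eq⟩ := isOpen_induced_iff.mp
        (isOpen_lt (((h.continuous).abs.sub continuous_const).abs) continuous_const :
          IsOpen {w : S | |(|h w| - |h ⟨z, hzS⟩|)| < 4⁻¹})
      have hzV' : z ∈ V' := by
        have : (⟨z, hzS⟩ : S) ∈ {w : S | |(|h w| - |h ⟨z, hzS⟩|)| < 4⁻¹} := by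
          simp only [mem_setOf_eq, sub_self, abs_zero]
          norm_num
        rw [← hV'eq] at this
        exact this
      have huniqV' : ∀ (m : ℕ) (w₁ : X), w₁ ∈ V' → φ m w₁ ≠ 0 →
          ∀ (k : ℕ) (w₂ : X), w₂ ∈ V' → φ k w₂ ≠ 0 → m = k := by
        intro m w₁ hw₁ hφm k w₂ hw₂ hφk
        obtain ⟨hz₁, hm', _⟩ := hkey w₁ m hφm
        obtain ⟨hz₂, hk', _⟩ := hkey w₂ k hφk
        have hN₁ : (⟨w₁, hz₁⟩ : S) ∈ {w : S | |(|h w| - |h ⟨z, hzS⟩|)| < 4⁻¹} := by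
          rw [← hV'eq]; exact hw₁
        have hN₂ : (⟨w₂, hz₂⟩ : S) ∈ {w : S | |(|h w| - |h ⟨z, hzS⟩|)| < 4⁻¹} := by
          rw [← hV'eq]; exact hw₂
        simp only [mem_setOf_eq] at hN₁ hN₂
        by_contra hne
        have h1 := hgapA m k hne
        have t₁ : |A m - (|h ⟨z, hzS⟩|)| ≤ |(|h ⟨w₁, hz₁⟩|) - A m| + |(|h ⟨w₁, hz₁⟩|) - (|h ⟨z, hzS⟩|)| := by
          rw [abs_sub_comm (|h ⟨w₁, hz₁⟩|) (A m)]
          exact abs_sub_le (A m) (|h ⟨w₁, hz₁⟩|) (|h ⟨z, hzS⟩|)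
        have t₂ : |A k - (|h ⟨z, hzS⟩|)| ≤ |(|h ⟨w₂, hz₂⟩|) - A k| + |(|h ⟨w₂, hz₂⟩|) - (|h ⟨z, hzS⟩|)| := by
          rw [abs_sub_comm (|h ⟨w₂, hz₂⟩|) (A k)]
          exact abs_sub_le (A k) (|h ⟨w₂, hz₂⟩|) (|h ⟨z, hzS⟩|)
        have t₃ : |A m - A k| ≤ |A m - (|h ⟨z, hzS⟩|)| + |A k - (|h ⟨z, hzS⟩|)| := by
          rw [abs_sub_comm (A k) (|h ⟨z, hzS⟩|)]
          exact abs_sub_le (A m) (|h ⟨z, hzS⟩|) (A k)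
        norm_num at hm' hk' hN₁ hN₂
        linarith
      by_cases hcand : ∃ (n : ℕ) (w : X), w ∈ V' ∧ φ n w ≠ 0
      · obtain ⟨n₀, w₀, hw₀V, hw₀φ⟩ := hcand
        have heq : ∀ w ∈ V', s w = c n₀ * φ n₀ w := by
          intro w hw
          by_cases h0 : φ n₀ w = 0
          · have hall : ∀ n, φ n w = 0 := by
              intro n
              by_contra hph
              have := huniqV' n w hw hph n₀ w₀ hw₀V hw₀φ
              rw [this] at hph
              exact hph h0
            rw [hszero w hall, h0, mul_zero]
          · exact hsval w n₀ h0
        have hmodel : ContinuousAt (fun w => c n₀ * φ n₀ w) z :=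
          (continuous_const.mul (hφc n₀)).continuousAt
        refine hmodel.congr ?_
        filter_upwards [hV'open.mem_nhds hzV'] with w hw
        exact (heq w hw).symm
      · push_neg at hcand
        have heq : ∀ w ∈ V', s w = 0 := by
          intro w hw
          exact hszero w (fun n => hcand n w hw)
        refine (continuousAt_const (y := (0:ℝ))).congr ?_
        filter_upwards [hV'open.mem_nhds hzV'] with w hw
        exact (heq w hw).symm
    · have heq : ∀ᶠ w in 𝓝 z, s w = 0 := by
        filter_upwards [isClosed_closure.isOpen_compl.mem_nhds hzS] with w hw
        apply hszero
        intro n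
        by_contra hph
        obtain ⟨hwS, _, _⟩ := hkey w n hph
        exact hw hwS
      refine (continuousAt_const (y := (0:ℝ))).congr ?_
      exact heq.mono fun w hw => hw.symm
  have hspos : ∀ z, (0:ℝ) < 1 + s z := fun z => by linarith [hsnonneg z]
  set wfun : C(X, ℝ) := ⟨fun z => (1 + s z)⁻¹,
    Continuous.inv₀ (continuous_const.add hscont) (fun z => (hspos z).ne')⟩ with hwfun
  have hwpos : ∀ z, 0 < wfun z := fun z => inv_pos.2 (hspos z)
  obtain ⟨M, hM⟩ := hb wfun hwpos
  set n : ℕ := ⌈max M 0⌉₊ + 1 with hn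
  have hφ1 : φ n (x n) = (1:ℝ) := hφx n
  have hsx : s (x n) = c n := by
    rw [hsval (x n) n (by rw [hφ1]; exact one_ne_zero), hφ1, mul_one]
  have hMn := hM (x n)
  have hwx : wfun (x n) = (1 + c n)⁻¹ := by
    simp only [hwfun, ContinuousMap.coe_mk, hsx]
  rw [hwx] at hMn
  have h1cn : (0:ℝ) < 1 + c n := by linarith [hc0 n]
  have hfin : |g (x n)| * (1 + c n) ≤ M := by
    calc |g (x n)| * (1 + c n) ≤ (M * (1 + c n)⁻¹) * (1 + c n) :=
          mul_le_mul_of_nonneg_right hMn h1cn.le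
      _ = M := by rw [mul_assoc, inv_mul_cancel₀ h1cn.ne', mul_one]
  have hcnval : |g (x n)| * c n = (n:ℝ) := by
    show |g (x n)| * ((n : ℝ) / |g (x n)|) = (n:ℝ)
    rw [mul_comm, div_mul_cancel₀ _ (hgx n).ne']
  have hnM : M < (n : ℝ) := by
    have h1 := Nat.le_ceil (max M 0)
    have h2 : M ≤ max M 0 := le_max_left _ _
    have : (n : ℝ) = (⌈max M 0⌉₊ : ℝ) + 1 := by rw [hn]; push_cast; ring
    rw [this]
    linarith
  nlinarith [hgx n, hfin, hcnval, hnM]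

end Hard


/-- in `C(X)` with the `m^I`-topology, the path component and the
connected component of `0` both equal `C_ψ(X) ∩ I`, where
`C_ψ(X) = {f : cl_X {x : f x ≠ 0} is pseudocompact}`. -/
theorem stmt_17 {X : Type*} [TopologicalSpace X] [T35Space X] (I : Ideal C(X, ℝ)) :
    @pathComponent C(X, ℝ) (mTopology I) 0 =
        {f : C(X, ℝ) | PseudocompactOn (closure {x : X | f x ≠ 0})} ∩ (I : Set C(X, ℝ)) ∧
    @connectedComponent C(X, ℝ) (mTopology I) 0 =
        {f : C(X, ℝ) | PseudocompactOn (closure {x : X | f x ≠ 0})} ∩ (I : Set C(X, ℝ)) := by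
  set P := {f : C(X, ℝ) | PseudocompactOn (closure {x : X | f x ≠ 0})} ∩ (I : Set C(X, ℝ))
    with hP
  have h1 : P ⊆ @pathComponent C(X, ℝ) (mTopology I) 0 := by
    rintro f ⟨hfp, hfI⟩
    exact joined_zero I f hfI hfp
  have h2 : @pathComponent C(X, ℝ) (mTopology I) 0 ⊆
      @connectedComponent C(X, ℝ) (mTopology I) 0 :=
    @pathComponent_subset_component _ (mTopology I) 0
  have h3 : @connectedComponent C(X, ℝ) (mTopology I) 0 ⊆ P := by
    intro f hf
    constructor
    · apply hard_lemma
      intro w hw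
      have hmem : (0 : C(X, ℝ)) ∈ Ew w := ⟨0, fun x => by simp⟩
      exact (@IsClopen.connectedComponent_subset _ (mTopology I) _ _ (isClopen_Ew I w hw) hmem) hf
    · exact (@IsClopen.connectedComponent_subset _ (mTopology I) _ _ (isClopen_ideal I)
        I.zero_mem) hf
  exact ⟨subset_antisymm (fun f hf => h3 (h2 hf)) h1, subset_antisymm h3 (fun f hf => h2 (h1 hf))⟩
end
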